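/- arXiv:1009.5314 — 5 statements merged into one kernel-verified Lean document; each statement's English description precedes it below -/
import Mathlib

section
/- Let f be a continuous real-valued function on a closed interval [a,b]. If for each x ∈ (a,b) either the left derivative of f at x exists and vanishes, or the right derivative of f at x exists and vanishes, then f is constant on [a,b]. -/
open Set Filter

lemma countable_strict_local_min (g : ℝ → ℝ) :
    {x : ℝ | ∃ p q : ℝ, p < x ∧ x < q ∧ ∀ t ∈ Set.Ioo p q, t ≠ x → g x < g t}.Countable := by
  have : {x : ℝ | ∃ p q : ℝ, p < x ∧ x < q ∧ ∀ t ∈ Set.Ioo p q, t ≠ x → g x < g t}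
      ⊆ ⋃ (p : ℚ) (q : ℚ),
        {x : ℝ | x ∈ Set.Ioo (p : ℝ) q ∧ ∀ t ∈ Set.Ioo (p : ℝ) q, t ≠ x → g x < g t} := by
    rintro x ⟨p, q, hpx, hxq, hmin⟩
    obtain ⟨p', hp1, hp2⟩ := exists_rat_btwn hpx
    obtain ⟨q', hq1, hq2⟩ := exists_rat_btwn hxq
    refine Set.mem_iUnion.2 ⟨p', Set.mem_iUnion.2 ⟨q', ⟨⟨hp2, hq1⟩, ?_⟩⟩⟩
    intro t ht htx
    exact hmin t ⟨hp1.trans ht.1, ht.2.trans hq2⟩ htx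
  refine Set.Countable.mono this ?_
  refine Set.countable_iUnion fun p => Set.countable_iUnion fun q => ?_
  apply Set.Subsingleton.countable
  rintro x ⟨hx, hminx⟩ y ⟨hy, hminy⟩
  by_contra hxy
  exact absurd (hminx y hy (Ne.symm hxy)) (not_lt.2 (le_of_lt (hminy x hx hxy)))

/-- Core growth estimate. -/
lemma growth_est (f : ℝ → ℝ) (a b : ℝ)
    (hf : ContinuousOn f (Set.Icc a b))
    (h : ∀ x ∈ Set.Ioo a b,
      HasDerivWithinAt f 0 (Set.Iio x) x ∨ HasDerivWithinAt f 0 (Set.Ioi x) x)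
    {x y : ℝ} (hx : x ∈ Set.Ioo a b) (hy : y ∈ Set.Ioo a b) (hxy : x < y)
    {ε : ℝ} (hε : 0 < ε) : f y - f x ≤ ε * (y - x) := by
  by_contra hcon
  push_neg at hcon
  set g : ℝ → ℝ := fun t => f t - ε * t with hg
  have hsub : Set.Icc x y ⊆ Set.Icc a b :=
    Set.Icc_subset_Icc (le_of_lt hx.1) (le_of_lt hy.2)
  have hgc : ContinuousOn g (Set.Icc x y) :=
    (hf.mono hsub).sub ((continuous_const.mul continuous_id).continuousOn)
  have hgxy : g x < g y := by
    simp only [hg]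
    nlinarith
  -- the strict local min set
  set M := {c : ℝ | ∃ p q : ℝ, p < c ∧ c < q ∧ ∀ t ∈ Set.Ioo p q, t ≠ c → g c < g t} with hM
  -- for each v in (g x, g y), the last crossing point is a strict local min with value v
  have key : ∀ v ∈ Set.Ioo (g x) (g y), ∃ c ∈ M, g c = v := by
    rintro v ⟨hv1, hv2⟩
    set S := {t ∈ Set.Icc x y | g t ≤ v} with hS
    have hxS : x ∈ S := ⟨⟨le_refl x, le_of_lt hxy⟩, le_of_lt hv1⟩
    have hSne : S.Nonempty := ⟨x, hxS⟩
    have hSbdd : BddAbove S := ⟨y, fun t ht => ht.1.2⟩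
    set c := sSup S with hc
    have hcx : x ≤ c := le_csSup hSbdd hxS
    have hcy : c ≤ y := csSup_le hSne fun t ht => ht.1.2
    have hcIcc : c ∈ Set.Icc x y := ⟨hcx, hcy⟩
    -- points strictly past c are above level v
    have key1 : ∀ z, c < z → z ≤ y → v < g z := by
      intro z hz1 hz2
      by_contra hzv
      push_neg at hzv
      exact absurd (le_csSup hSbdd ⟨⟨hcx.trans (le_of_lt hz1), hz2⟩, hzv⟩) (not_le.2 hz1)
    have hclos : c ∈ closure S := csSup_mem_closure hSne hSbdd
    have hcw : ContinuousWithinAt g S c :=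
      (hgc c hcIcc).mono (fun t ht => ht.1)
    have hne : (nhdsWithin c S).NeBot := mem_closure_iff_nhdsWithin_neBot.1 hclos
    have hgcle : g c ≤ v :=
      le_of_tendsto hcw (eventually_nhdsWithin_of_forall (fun t ht => ht.2))
    have hcyx : c < y := lt_of_le_of_ne hcy (fun hh => by
      rw [hh] at hgcle; exact absurd hv2 (not_lt.2 hgcle))
    -- g c = v by right continuity
    have hgcv : g c = v := by
      refine le_antisymm hgcle ?_
      by_contra hlt
      push_neg at hlt
      have hcw2 : ContinuousWithinAt g (Set.Icc x y) c := hgc c hcIcc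
      have hev : ∀ᶠ t in nhdsWithin c (Set.Icc x y), g t < v :=
        hcw2.eventually (eventually_lt_nhds hlt) |>.mono (fun t ht => ht)
      have hsub2 : Set.Ioc c y ⊆ Set.Icc x y := fun t ht => ⟨hcx.trans (le_of_lt ht.1), ht.2⟩
      have hne2 : (nhdsWithin c (Set.Ioc c y)).NeBot := by
        apply mem_closure_iff_nhdsWithin_neBot.1
        rw [closure_Ioc (ne_of_lt hcyx)]
        exact ⟨le_refl c, le_of_lt hcyx⟩
      have hev2 : ∀ᶠ t in nhdsWithin c (Set.Ioc c y), g t < v :=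
        hev.filter_mono (nhdsWithin_mono c hsub2)
      obtain ⟨t, ht, htm⟩ := (hev2.and (eventually_mem_nhdsWithin)).exists
      exact absurd (key1 t htm.1 htm.2) (not_lt.2 (le_of_lt ht))
    -- c is interior
    have hcab : c ∈ Set.Ioo a b := ⟨lt_of_lt_of_le hx.1 hcx, lt_of_lt_of_le hcyx (le_of_lt hy.2)⟩
    -- derivative of g
    rcases h c hcab with hd | hd
    · -- left derivative case : c is a strict local min
      have hgd : HasDerivWithinAt g (0 - ε * 1) (Set.Iio c) c :=
        hd.sub ((hasDerivWithinAt_id c (Set.Iio c)).const_mul ε)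
      rw [hasDerivWithinAt_iff_tendsto_slope' (Set.notMem_Iio.2 (le_refl c))] at hgd
      have hslope : ∀ᶠ t in nhdsWithin c (Set.Iio c), slope g c t < 0 := by
        apply hgd.eventually (eventually_lt_nhds ?_)
        simpa using hε
      obtain ⟨l, hl, hls⟩ := mem_nhdsLT_iff_exists_Ioo_subset.1 hslope
      refine ⟨c, ⟨l, y, ?_, hcyx, ?_⟩, hgcv⟩
      · exact hl
      · intro t ht htc
        rcases lt_or_gt_of_ne htc with h1 | h1
        · have := hls ⟨ht.1, h1⟩
          simp only [Set.mem_setOf_eq, slope_def_field] at this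
          have h2 : t - c < 0 := by linarith
          rcases div_neg_iff.1 this with ⟨h3, h4⟩ | ⟨h3, h4⟩
          · linarith
          · linarith
        · have := key1 t h1 (le_of_lt ht.2)
          linarith [hgcv ▸ this]
    · -- right derivative case : contradiction
      exfalso
      have hgd : HasDerivWithinAt g (0 - ε * 1) (Set.Ioi c) c :=
        hd.sub ((hasDerivWithinAt_id c (Set.Ioi c)).const_mul ε)
      rw [hasDerivWithinAt_iff_tendsto_slope' (Set.notMem_Ioi.2 (le_refl c))] at hgd
      have hslope : ∀ᶠ t in nhdsWithin c (Set.Ioi c), slope g c t < 0 := by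
        apply hgd.eventually (eventually_lt_nhds ?_)
        simpa using hε
      have hmem : Set.Ioo c y ∈ nhdsWithin c (Set.Ioi c) :=
        Ioo_mem_nhdsGT hcyx
      obtain ⟨t, hts, htm⟩ := (hslope.and (eventually_of_mem hmem (fun t ht => ht))).exists
      simp only [slope_def_field] at hts
      have h2 : 0 < t - c := by linarith [htm.1]
      have hv3 := key1 t htm.1 (le_of_lt htm.2)
      rw [← hgcv] at hv3
      rcases div_neg_iff.1 hts with ⟨h3, h4⟩ | ⟨h3, h4⟩
      · linarith
      · linarith
  -- contradiction by countability
  have himg : Set.Ioo (g x) (g y) ⊆ g '' M := by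
    intro v hv
    obtain ⟨c, hc, hgc2⟩ := key v hv
    exact ⟨c, hc, hgc2⟩
  have hcnt : (Set.Ioo (g x) (g y)).Countable :=
    Set.Countable.mono himg ((countable_strict_local_min g).image g)
  have := Cardinal.mk_Ioo_real hgxy
  rw [Set.countable_iff_exists_injective] at hcnt
  have h1 : (Cardinal.mk (Set.Ioo (g x) (g y))) ≤ Cardinal.aleph0 := by
    rw [Cardinal.le_aleph0_iff_set_countable]
    exact Set.Countable.mono himg ((countable_strict_local_min g).image g)
  rw [this] at h1
  exact absurd h1 (not_le.2 (Cardinal.aleph0_lt_continuum))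

/-- A continuous function on [a,b] whose left or right derivative
vanishes at each interior point is constant. -/
theorem constant_of_one_sided_deriv_zero
    (f : ℝ → ℝ) (a b : ℝ) (hab : a ≤ b)
    (hf : ContinuousOn f (Set.Icc a b))
    (h : ∀ x ∈ Set.Ioo a b,
      HasDerivWithinAt f 0 (Set.Iio x) x ∨ HasDerivWithinAt f 0 (Set.Ioi x) x) :
    ∀ x ∈ Set.Icc a b, ∀ y ∈ Set.Icc a b, f x = f y := by
  rcases eq_or_lt_of_le hab with hab | hab
  · intro x hx y hy
    rw [← hab] at hx hy
    simp only [Set.Icc_self, Set.mem_singleton_iff] at hx hy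
    rw [hx, hy]
  have growth : ∀ x ∈ Set.Ioo a b, ∀ y ∈ Set.Ioo a b, x < y → ∀ ε : ℝ, 0 < ε →
      f y - f x ≤ ε * (y - x) := fun x hx y hy hxy ε hε => growth_est f a b hf h hx hy hxy hε
  have hneg : ∀ x ∈ Set.Ioo a b, HasDerivWithinAt (-f) 0 (Set.Iio x) x ∨
      HasDerivWithinAt (-f) 0 (Set.Ioi x) x := by
    intro x hx
    rcases h x hx with hd | hd
    · left; simpa using hd.neg
    · right; simpa using hd.neg
  have growth' : ∀ x ∈ Set.Ioo a b, ∀ y ∈ Set.Ioo a b, x < y → ∀ ε : ℝ, 0 < ε →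
      (-f) y - (-f) x ≤ ε * (y - x) :=
    fun x hx y hy hxy ε hε => growth_est (-f) a b hf.neg hneg hx hy hxy hε
  -- constant on Ioo
  have hIoo : ∀ x ∈ Set.Ioo a b, ∀ y ∈ Set.Ioo a b, x < y → f x = f y := by
    intro x hx y hy hxy
    have h1 : f y - f x ≤ 0 := by
      have := fun ε hε => growth x hx y hy hxy ε hε
      by_contra hc
      push_neg at hc
      have hyx : (0:ℝ) < y - x := by linarith
      have hne : (y - x) ≠ 0 := ne_of_gt hyx
      have hε : 0 < (f y - f x) / (2 * (y - x)) := div_pos hc (by linarith)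
      have h5 := this _ hε
      have h6 : (f y - f x) / (2 * (y - x)) * (y - x) = (f y - f x) / 2 := by
        field_simp
      rw [h6] at h5
      linarith
    have h2 : f x - f y ≤ 0 := by
      have := fun ε hε => growth' x hx y hy hxy ε hε
      simp only [Pi.neg_apply] at this
      by_contra hc
      push_neg at hc
      have hyx : (0:ℝ) < y - x := by linarith
      have hne : (y - x) ≠ 0 := ne_of_gt hyx
      have hε : 0 < (f x - f y) / (2 * (y - x)) := div_pos hc (by linarith)
      have h5 := this _ hε
      have h6 : (f x - f y) / (2 * (y - x)) * (y - x) = (f x - f y) / 2 := by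
        field_simp
      rw [h6] at h5
      linarith
    linarith
  set m := (a + b) / 2 with hm
  have hmI : m ∈ Set.Ioo a b := ⟨by linarith, by linarith⟩
  have hconst : ∀ u ∈ Set.Icc a b, f u = f m := by
    intro u hu
    rcases eq_or_lt_of_le hu.1 with h1 | h1
    · -- u = a
      rw [← h1]
      have haI : a ∈ Set.Icc a b := ⟨le_refl a, le_of_lt hab⟩
      have hne : (nhdsWithin a (Set.Ioo a b)).NeBot := by
        apply mem_closure_iff_nhdsWithin_neBot.1
        rw [closure_Ioo (ne_of_lt hab)]
        exact ⟨le_refl a, le_of_lt hab⟩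
      have ht1 : Tendsto f (nhdsWithin a (Set.Ioo a b)) (nhds (f a)) :=
        (hf a haI).mono Set.Ioo_subset_Icc_self
      have ht2 : Tendsto f (nhdsWithin a (Set.Ioo a b)) (nhds (f m)) := by
        apply Tendsto.congr' ?_ tendsto_const_nhds
        filter_upwards [eventually_mem_nhdsWithin] with t ht
        rcases lt_trichotomy t m with h2 | h2 | h2
        · exact (hIoo t ht m hmI h2).symm
        · rw [h2]
        · exact hIoo m hmI t ht h2
      exact tendsto_nhds_unique ht1 ht2
    rcases eq_or_lt_of_le hu.2 with h2 | h2
    · -- u = b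
      rw [h2]
      have hbI : b ∈ Set.Icc a b := ⟨le_of_lt hab, le_refl b⟩
      have hne : (nhdsWithin b (Set.Ioo a b)).NeBot := by
        apply mem_closure_iff_nhdsWithin_neBot.1
        rw [closure_Ioo (ne_of_lt hab)]
        exact ⟨le_of_lt hab, le_refl b⟩
      have ht1 : Tendsto f (nhdsWithin b (Set.Ioo a b)) (nhds (f b)) :=
        (hf b hbI).mono Set.Ioo_subset_Icc_self
      have ht2 : Tendsto f (nhdsWithin b (Set.Ioo a b)) (nhds (f m)) := by
        apply Tendsto.congr' ?_ tendsto_const_nhds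
        filter_upwards [eventually_mem_nhdsWithin] with t ht
        rcases lt_trichotomy t m with h3 | h3 | h3
        · exact (hIoo t ht m hmI h3).symm
        · rw [h3]
        · exact hIoo m hmI t ht h3
      exact tendsto_nhds_unique ht1 ht2
    · -- interior
      rcases lt_trichotomy u m with h3 | h3 | h3
      · exact hIoo u ⟨h1, h2⟩ m hmI h3
      · rw [h3]
      · exact (hIoo m hmI u ⟨h1, h2⟩ h3).symm
  intro x hx y hy
  rw [hconst x hx, hconst y hy]
end

section
/- Let (U(t,s))_{t≥s} be an evolution family on a separable Hilbert space H and (μ_{t,s})_{t≥s} a family of probability measures on H. Define the operators p_{s,t}f(x) = ∫_H f(U(t,s)x + y) μ_{t,s}(dy) for bounded measurable f. Then the Chapman–Kolmogorov equations p_{s,r}p_{r,t} = p_{s,t} hold on B_b(H) for all s ≤ r ≤ t if and only if μ_{t,s} = μ_{t,r} * (μ_{r,s} ∘ U(t,r)^{-1}) for all s ≤ r ≤ t. -/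
open MeasureTheory

variable {H : Type*} [NormedAddCommGroup H] [InnerProductSpace ℝ H] [CompleteSpace H]
  [SecondCountableTopology H] [MeasurableSpace H] [BorelSpace H]

/-- Convolution of two measures on `H`. -/
noncomputable def mconv (μ ν : Measure H) : Measure H :=
  (μ.prod ν).map (fun p : H × H => p.1 + p.2)

/-- The (non-time-homogeneous generalized Mehler) transition operator
`p_{s,t} f (x) = ∫ f (U(t,s) x + y) μ_{t,s}(dy)`. -/
noncomputable def pst (U : ℝ → ℝ → H →L[ℝ] H) (μ : ℝ → ℝ → Measure H)
    (s t : ℝ) (f : H → ℝ) (x : H) : ℝ :=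
  ∫ y, f (U t s x + y) ∂(μ t s)

private lemma integrable_of_bdd {α : Type*} [MeasurableSpace α] {μ : Measure α}
    [IsFiniteMeasure μ] {g : α → ℝ} (hg : AEStronglyMeasurable g μ) {C : ℝ}
    (hC : ∀ x, |g x| ≤ C) : Integrable g μ :=
  Integrable.mono' (integrable_const C) hg
    (Filter.Eventually.of_forall fun x => by simpa [Real.norm_eq_abs] using hC x)

private lemma integral_mconv_symm (μ ν : Measure H) [IsProbabilityMeasure μ]
    [IsProbabilityMeasure ν] {g : H → ℝ} (hg : Measurable g) {C : ℝ}
    (hC : ∀ x, |g x| ≤ C) :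
    ∫ w, g w ∂(mconv μ ν) = ∫ w, ∫ z, g (z + w) ∂μ ∂ν := by
  rw [mconv, integral_map (φ := fun p : H × H => p.1 + p.2)
    (measurable_fst.add measurable_snd).aemeasurable hg.aestronglyMeasurable]
  exact integral_prod_symm _ (integrable_of_bdd
    ((hg.comp (measurable_fst.add measurable_snd)).aestronglyMeasurable)
    (fun p => hC _))

private lemma sm_param (ν : Measure H) [SFinite ν] {F : H → H → ℝ}
    (hF : Measurable (Function.uncurry F)) :
    StronglyMeasurable fun w => ∫ z, F w z ∂ν :=
  hF.stronglyMeasurable.integral_prod_right'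

/-- the Chapman–Kolmogorov equations for `p_{s,t}` hold iff the
skew convolution equations `μ_{t,s} = μ_{t,r} * (μ_{r,s} ∘ U(t,r)⁻¹)` hold. -/
theorem chapman_kolmogorov_iff_skew_convolution
    (U : ℝ → ℝ → H →L[ℝ] H) (μ : ℝ → ℝ → Measure H)
    (hprob : ∀ t s : ℝ, IsProbabilityMeasure (μ t s))
    (hId : ∀ s : ℝ, U s s = ContinuousLinearMap.id ℝ H)
    (hComp : ∀ t r s : ℝ, s ≤ r → r ≤ t → (U t r).comp (U r s) = U t s)
    (hCont : ∀ x : H, ContinuousOn (fun p : ℝ × ℝ => U p.1 p.2 x) {p : ℝ × ℝ | p.2 ≤ p.1}) :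
    (∀ s r t : ℝ, s ≤ r → r ≤ t → ∀ f : H → ℝ, Measurable f → (∃ C, ∀ x, |f x| ≤ C) →
        ∀ x, pst U μ s r (pst U μ r t f) x = pst U μ s t f x)
    ↔ (∀ s r t : ℝ, s ≤ r → r ≤ t → μ t s = mconv (μ t r) ((μ r s).map (U t r))) := by
  have hUmeas : ∀ t r : ℝ, Measurable (U t r) := fun t r => (U t r).continuous.measurable
  constructor
  · intro hCK s r t hsr hrt
    haveI := hprob t s; haveI := hprob t r; haveI := hprob r s
    haveI : IsProbabilityMeasure ((μ r s).map (U t r)) :=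
      Measure.isProbabilityMeasure_map (hUmeas t r).aemeasurable
    ext A hA
    set f : H → ℝ := A.indicator (fun _ => (1 : ℝ)) with hf
    have hfm : Measurable f := measurable_const.indicator hA
    have hfb : ∀ x, |f x| ≤ 1 := by
      intro x
      by_cases hx : x ∈ A <;> simp [hf, Set.indicator_apply, hx]
    have hkey := hCK s r t hsr hrt f hfm ⟨1, hfb⟩ 0
    -- compute the inner parametric integrals
    have h1 : pst U μ s t f 0 = ∫ y, f y ∂(μ t s) := by
      simp [pst]
    have h2 : pst U μ s r (pst U μ r t f) 0
        = ∫ y, ∫ z, f (U t r y + z) ∂(μ t r) ∂(μ r s) := by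
      simp [pst]
    have h3 : ∫ w, f w ∂(mconv (μ t r) ((μ r s).map (U t r)))
        = ∫ y, ∫ z, f (U t r y + z) ∂(μ t r) ∂(μ r s) := by
      rw [integral_mconv_symm _ _ hfm hfb]
      rw [integral_map (hUmeas t r).aemeasurable]
      · refine integral_congr_ae (Filter.Eventually.of_forall fun y => ?_)
        refine integral_congr_ae (Filter.Eventually.of_forall fun z => ?_)
        dsimp only; rw [add_comm]
      · exact (sm_param (μ t r)
          (F := fun w z => f (z + w))
          (hfm.comp (measurable_snd.add measurable_fst))).aestronglyMeasurable
    have hint : ∫ y, f y ∂(μ t s)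
        = ∫ w, f w ∂(mconv (μ t r) ((μ r s).map (U t r))) := by
      rw [h3, ← h2, hkey, h1]
    have hint' : ((μ t s) A).toReal
        = ((mconv (μ t r) ((μ r s).map (U t r))) A).toReal := by
      rw [← measureReal_def, ← measureReal_def, ← integral_indicator_one hA,
        ← integral_indicator_one hA]; exact hint
    haveI : IsProbabilityMeasure (mconv (μ t r) ((μ r s).map (U t r))) :=
      Measure.isProbabilityMeasure_map (measurable_fst.add measurable_snd).aemeasurable
    exact ((ENNReal.toReal_eq_toReal_iff' (measure_ne_top _ _) (measure_ne_top _ _))).mp hint'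
  · rintro hconv s r t hsr hrt f hfm ⟨C, hC⟩ x
    haveI := hprob t s; haveI := hprob t r; haveI := hprob r s
    haveI : IsProbabilityMeasure ((μ r s).map (U t r)) :=
      Measure.isProbabilityMeasure_map (hUmeas t r).aemeasurable
    have harg : ∀ y z : H, U t r (U r s x + y) + z = U t s x + (z + U t r y) := by
      intro y z
      have : U t s x = U t r (U r s x) := by
        rw [← hComp t r s hsr hrt]; rfl
      rw [map_add, this]; abel
    have hLHS : pst U μ s r (pst U μ r t f) x
        = ∫ y, ∫ z, f (U t s x + (z + U t r y)) ∂(μ t r) ∂(μ r s) := by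
      simp only [pst]
      refine integral_congr_ae (Filter.Eventually.of_forall fun y => ?_)
      refine integral_congr_ae (Filter.Eventually.of_forall fun z => ?_)
      dsimp only; rw [harg]
    have hg : Measurable fun w => f (U t s x + w) :=
      hfm.comp (measurable_const.add measurable_id)
    have hgb : ∀ w, |f (U t s x + w)| ≤ C := fun w => hC _
    have hRHS : pst U μ s t f x
        = ∫ y, ∫ z, f (U t s x + (z + U t r y)) ∂(μ t r) ∂(μ r s) := by
      rw [pst, hconv s r t hsr hrt, integral_mconv_symm _ _ hg hgb,
        integral_map (hUmeas t r).aemeasurable]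
      exact (sm_param (μ t r)
        (F := fun w z => f (U t s x + (z + w)))
        (hfm.comp (measurable_const.add
          (measurable_snd.add measurable_fst)))).aestronglyMeasurable
    rw [hLHS, hRHS]
end

section
/- Let ψ_{t,s}(ξ) = −log μ̂_{t,s}(ξ) where (μ_{t,s})_{t≥s} satisfies ψ_{t,s}(ξ) = ψ_{t,r}(ξ) + ψ_{r,s}(U(t,r)*ξ) for t ≥ r ≥ s. Suppose for every ξ ∈ H and t: (1) s ↦ ψ_{t,s}(ξ) is continuous on (−∞,t] and left differentiable at s = t, with left derivative −λ_t(ξ); (2) s ↦ λ_s(U(t,s)*ξ) is continuous. Then for every ξ ∈ H and t ≥ s, μ̂_{t,s}(ξ) = exp(−∫_s^t λ_r(U(t,r)*ξ) dr). -/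
open MeasureTheory RealInnerProductSpace

variable {H : Type*} [NormedAddCommGroup H] [InnerProductSpace ℝ H] [CompleteSpace H]
  [SecondCountableTopology H] [MeasurableSpace H] [BorelSpace H]

noncomputable def charFn (μ : Measure H) (ξ : H) : ℂ :=
  ∫ x, Complex.exp (Complex.I * (⟪x, ξ⟫ : ℝ)) ∂μ

/-- if `ψ_{t,s} = -log μ̂_{t,s}` satisfies the cocycle identity, is
continuous and left differentiable at `s = t` with left derivative `-λ_t`, and
`s ↦ λ_s(U(t,s)*ξ)` is continuous, then
`μ̂_{t,s}(ξ) = exp(-∫_s^t λ_r(U(t,r)*ξ) dr)`. -/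
theorem char_integral_representation
    (U : ℝ → ℝ → H →L[ℝ] H)
    (hId : ∀ s : ℝ, U s s = ContinuousLinearMap.id ℝ H)
    (hComp : ∀ t r s : ℝ, s ≤ r → r ≤ t → (U t r).comp (U r s) = U t s)
    (hCont : ∀ x : H, ContinuousOn (fun p : ℝ × ℝ => U p.1 p.2 x) {p : ℝ × ℝ | p.2 ≤ p.1})
    (μ : ℝ → ℝ → Measure H) (hprob : ∀ t s : ℝ, IsProbabilityMeasure (μ t s))
    (ψ : ℝ → ℝ → H → ℂ) (lam : ℝ → H → ℂ)
    (hψ : ∀ t s : ℝ, s ≤ t → ∀ ξ : H, charFn (μ t s) ξ = Complex.exp (-(ψ t s ξ)))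
    (hcoc : ∀ t r s : ℝ, s ≤ r → r ≤ t → ∀ ξ : H,
      ψ t s ξ = ψ t r ξ + ψ r s (ContinuousLinearMap.adjoint (U t r) ξ))
    (hcont : ∀ (t : ℝ) (ξ : H), ContinuousOn (fun s => ψ t s ξ) (Set.Iic t))
    (hderiv : ∀ (t : ℝ) (ξ : H),
      HasDerivWithinAt (fun s => ψ t s ξ) (-(lam t ξ)) (Set.Iio t) t)
    (hlamcont : ∀ (t : ℝ) (ξ : H),
      ContinuousOn (fun s => lam s (ContinuousLinearMap.adjoint (U t s) ξ)) (Set.Iic t)) :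
    ∀ t s : ℝ, s ≤ t → ∀ ξ : H,
      charFn (μ t s) ξ
        = Complex.exp (-∫ r in s..t, lam r (ContinuousLinearMap.adjoint (U t r) ξ)) := by
  have hpsi_rr : ∀ (r : ℝ) (η : H), ψ r r η = 0 := by
    intro r η
    have h := hcoc r r r le_rfl le_rfl η
    rw [hId r, ContinuousLinearMap.adjoint_id, ContinuousLinearMap.id_apply] at h
    exact (left_eq_add.mp h)
  intro t s hst ξ
  rw [hψ t s hst ξ]
  congr 1
  congr 1
  -- reduce to ψ t s ξ = ∫ s..t lam
  set g : ℝ → ℂ := fun u => lam u (ContinuousLinearMap.adjoint (U t u) ξ) with hg_def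
  have hgcont : ContinuousOn g (Set.Iic t) := hlamcont t ξ
  have hgint : ∀ x : ℝ, x ≤ t → IntervalIntegrable g volume x t := fun x hx =>
    (hgcont.mono (by rw [Set.uIcc_of_le hx]; exact Set.Icc_subset_Iic_self)).intervalIntegrable
  set h : ℝ → ℂ := fun x => ψ t x ξ - ∫ u in x..t, g u with hh_def
  have hkey : ∀ r : ℝ, r ≤ t → HasDerivWithinAt h 0 (Set.Iic r) r := by
    intro r hrt
    set η : H := ContinuousLinearMap.adjoint (U t r) ξ with hη
    have h1 : HasDerivWithinAt (fun x => ψ t x ξ) (-(lam r η)) (Set.Iic r) r := by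
      have h2 : HasDerivWithinAt (fun x => ψ t r ξ + ψ r x η) (-(lam r η)) (Set.Iio r) r :=
        (hderiv r η).const_add _
      have h2' : HasDerivWithinAt (fun x => ψ t r ξ + ψ r x η) (-(lam r η)) (Set.Iic r) r := by
        rw [← Set.Iio_insert]; exact hasFDerivWithinAt_insert.mpr h2
      exact h2'.congr (fun y hy => hcoc t r y hy hrt ξ) (hcoc t r r le_rfl hrt ξ)
    have hcw : ContinuousWithinAt g (Set.Iic r) r :=
      (hgcont.mono (Set.Iic_subset_Iic.mpr hrt)) r (Set.mem_Iic.mpr le_rfl)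
    have hmeas : StronglyMeasurableAtFilter g (nhdsWithin r (Set.Iic r)) volume :=
      (hgcont.mono (Set.Iic_subset_Iic.mpr hrt)).stronglyMeasurableAtFilter_nhdsWithin
        measurableSet_Iic r
    have hF : HasDerivWithinAt (fun x => ∫ u in x..t, g u) (-(g r)) (Set.Iic r) r :=
      intervalIntegral.integral_hasDerivWithinAt_left (hgint r hrt) hmeas hcw
    have := h1.sub hF
    have e : -(lam r η) - -(g r) = 0 := by simp [g, η]
    rw [e] at this
    exact this
  -- continuity of h on Icc s t
  have hhcont : ContinuousOn h (Set.Icc s t) := by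
    apply ContinuousOn.sub
    · exact (hcont t ξ).mono Set.Icc_subset_Iic_self
    · have hint : IntegrableOn g (Set.uIcc s t) volume := by
        rw [Set.uIcc_of_le hst]
        exact (hgcont.mono Set.Icc_subset_Iic_self).integrableOn_Icc
      have hprim := intervalIntegral.continuousOn_primitive_interval hint
      rw [Set.uIcc_of_le hst] at hprim
      have heq : ∀ x ∈ Set.Icc s t, (∫ u in s..t, g u) - (∫ u in s..x, g u) = ∫ u in x..t, g u := by
        intro x hx
        have hint1 : IntervalIntegrable g volume s x := by
          apply (hgint s hst).mono_set
          rw [Set.uIcc_of_le hst, Set.uIcc_of_le hx.1]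
          exact Set.Icc_subset_Icc le_rfl hx.2
        rw [sub_eq_iff_eq_add, ← intervalIntegral.integral_add_adjacent_intervals hint1 (hgint x hx.2)]
        ring
      exact (continuousOn_const.sub hprim).congr fun x hx => (heq x hx).symm
  -- reversal: k x = h (s + t - x)
  set k : ℝ → ℂ := fun x => h (s + t - x) with hk_def
  have hkcont : ContinuousOn k (Set.Icc s t) := by
    apply hhcont.comp (by fun_prop)
    intro x hx
    constructor <;> simp at hx ⊢ <;> linarith [hx.1, hx.2]
  have hkderiv : ∀ x ∈ Set.Ico s t, HasDerivWithinAt k 0 (Set.Ici x) x := by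
    intro x hx
    have hu : s + t - x ≤ t := by linarith [hx.1]
    have hphi : HasDerivWithinAt (fun x' : ℝ => s + t - x') (-1) (Set.Ici x) x := by
      simpa using ((hasDerivAt_id x).const_sub (s + t)).hasDerivWithinAt
    have hmaps : Set.MapsTo (fun x' : ℝ => s + t - x') (Set.Ici x) (Set.Iic (s + t - x)) := by
      intro y hy; simp only [Set.mem_Iic]; simp only [Set.mem_Ici] at hy; linarith
    have := (hkey (s + t - x) hu).scomp x hphi hmaps
    rw [smul_zero] at this
    exact this
  have hconst := constant_of_has_deriv_right_zero hkcont hkderiv t ⟨hst, le_rfl⟩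
  have hks : k s = h t := by simp [hk_def]
  have hkt : k t = h s := by simp [hk_def]
  have hht : h t = 0 := by simp [hh_def, hpsi_rr]
  have : h s = 0 := by rw [← hkt, hconst, hks, hht]
  have := sub_eq_zero.mp this
  simpa [hh_def] using this
end

section
/- Let p_{s,t} = p^g_{s,t} p^j_{s,t} be the decomposition of a non-homogeneous generalized Mehler semigroup into its Gaussian part p^g_{s,t} (with covariance R_{t,s} and drift operator U(t,s)) and jump part p^j_{s,t} (a convolution operator). Suppose the Gaussian part satisfies the Harnack inequality (p^g_{s,t}f(x))^α ≤ exp(α|Γ_{t,s}(x−y)|²/(2(α−1))) p^g_{s,t}f^α(y) with Γ_{t,s} = R_{t,s}^{-1/2}U(t,s). Then the full semigroup satisfies (p_{s,t}f(x))^α ≤ exp(α|Γ_{t,s}(x−y)|²/(2(α−1))) p_{s,t}f^α(y) for all α > 1, bounded nonnegative measurable f, and x,y ∈ H. -/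
open MeasureTheory

variable {H : Type*} [NormedAddCommGroup H] [InnerProductSpace ℝ H] [CompleteSpace H]
  [SecondCountableTopology H] [MeasurableSpace H] [BorelSpace H]

set_option linter.unusedSectionVars false

private lemma integrable_of_bdd_s16 {μ : Measure H} [IsProbabilityMeasure μ]
    {g : H → ℝ} (hg : AEStronglyMeasurable g μ) {C : ℝ} (hb : ∀ z, |g z| ≤ C) :
    Integrable g μ :=
  (integrable_const C).mono' hg (Filter.Eventually.of_forall fun z => by
    simpa [Real.norm_eq_abs] using hb z)

private lemma integrable_of_bdd_prod {μ ν : Measure H} [IsProbabilityMeasure μ]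
    [IsProbabilityMeasure ν] {g : H × H → ℝ} (hg : AEStronglyMeasurable g (μ.prod ν))
    {C : ℝ} (hb : ∀ z, |g z| ≤ C) : Integrable g (μ.prod ν) :=
  (integrable_const C).mono' hg (Filter.Eventually.of_forall fun z => by
    simpa [Real.norm_eq_abs] using hb z)

/-- Fubini-type formula for integration against `mconv`. -/
private lemma mconv_integral (μg μj : Measure H) [IsProbabilityMeasure μg]
    [IsProbabilityMeasure μj] {g : H → ℝ} (hg : Measurable g) {C : ℝ}
    (hb : ∀ z, |g z| ≤ C) :
    ∫ z, g z ∂(mconv μg μj) = ∫ b, ∫ a, g (a + b) ∂μg ∂μj := by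
  have hmeas : Measurable fun p : H × H => g (p.1 + p.2) :=
    hg.comp (measurable_fst.add measurable_snd)
  have hint : Integrable (fun p : H × H => g (p.1 + p.2)) (μg.prod μj) :=
    integrable_of_bdd_prod hmeas.aestronglyMeasurable (fun z => hb _)
  rw [mconv, integral_map (φ := fun p : H × H => p.1 + p.2) (measurable_fst.add measurable_snd).aemeasurable
    hg.aestronglyMeasurable]
  exact integral_prod_symm _ hint

/-- if the Gaussian part `pᶢ_{s,t}` of the generalized Mehler semigroup
satisfies the Harnack inequality with exponent `α|Γ_{t,s}(x-y)|²/(2(α-1))`, then so does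
the full semigroup `p_{s,t} = pᶢ_{s,t} pʲ_{s,t}` (with `μ_{t,s} = μᶢ_{t,s} * μʲ_{t,s}`). -/
theorem harnack_transfer
    (μg μj : Measure H) [IsProbabilityMeasure μg] [IsProbabilityMeasure μj]
    (U : H →L[ℝ] H) (Γ : H → H)
    (hHg : ∀ α : ℝ, 1 < α → ∀ f : H → ℝ, Measurable f → (∀ z, 0 ≤ f z) →
      (∃ C, ∀ z, f z ≤ C) → ∀ x y : H,
      (∫ z, f (U x + z) ∂μg) ^ α
        ≤ Real.exp (α * ‖Γ (x - y)‖ ^ 2 / (2 * (α - 1))) * ∫ z, (f (U y + z)) ^ α ∂μg) :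
    ∀ α : ℝ, 1 < α → ∀ f : H → ℝ, Measurable f → (∀ z, 0 ≤ f z) →
      (∃ C, ∀ z, f z ≤ C) → ∀ x y : H,
      (∫ z, f (U x + z) ∂(mconv μg μj)) ^ α
        ≤ Real.exp (α * ‖Γ (x - y)‖ ^ 2 / (2 * (α - 1)))
            * ∫ z, (f (U y + z)) ^ α ∂(mconv μg μj) := by
  intro α hα f hf hf0 hbdd x y
  obtain ⟨C, hC⟩ := hbdd
  have hC0 : 0 ≤ C := le_trans (hf0 0) (hC 0)
  have habs : ∀ z, |f z| ≤ C := fun z => abs_le.2 ⟨neg_nonpos.2 hC0 |>.trans (hf0 z), hC z⟩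
  set E := Real.exp (α * ‖Γ (x - y)‖ ^ 2 / (2 * (α - 1))) with hE
  -- measurability / boundedness of the basic integrands
  have hfx : Measurable fun z => f (U x + z) := hf.comp (measurable_const.add measurable_id)
  have hfyα : Measurable fun z => f (U y + z) ^ α :=
    (hf.comp (measurable_const.add measurable_id)).pow_const α
  have hfyα_bdd : ∀ z, |f (U y + z) ^ α| ≤ C ^ α := fun z => by
    rw [abs_of_nonneg (Real.rpow_nonneg (hf0 _) _)]
    exact Real.rpow_le_rpow (hf0 _) (hC _) (by linarith)
  -- rewrite both sides via Fubini for mconv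
  rw [mconv_integral μg μj hfx (C := C) (fun z => habs _),
    mconv_integral μg μj hfyα hfyα_bdd]
  -- inner integrals
  set G : H → ℝ := fun b => ∫ a, f (U x + (a + b)) ∂μg with hG
  have hGmeas : Measurable G := by
    have : StronglyMeasurable fun q : H × H => f (U x + (q.2 + q.1)) :=
      (hf.comp (measurable_const.add (measurable_snd.add measurable_fst))).stronglyMeasurable
    exact this.integral_prod_right'.measurable
  have hG0 : ∀ b, 0 ≤ G b := fun b => integral_nonneg fun a => hf0 _
  have hGC : ∀ b, G b ≤ C := fun b => by
    calc G b ≤ ∫ _, C ∂μg := by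
          refine integral_mono (integrable_of_bdd_s16
            (hf.comp (measurable_const.add (measurable_id.add measurable_const))).aestronglyMeasurable
            (fun a => habs _)) (integrable_const C) (fun a => hC _)
      _ = C := by simp
  set Gy : H → ℝ := fun b => ∫ a, f (U y + (a + b)) ^ α ∂μg with hGy
  have hGymeas : Measurable Gy := by
    have : StronglyMeasurable fun q : H × H => f (U y + (q.2 + q.1)) ^ α :=
      ((hf.comp (measurable_const.add (measurable_snd.add measurable_fst))).pow_const α).stronglyMeasurable
    exact this.integral_prod_right'.measurable
  have hGy0 : ∀ b, 0 ≤ Gy b := fun b => integral_nonneg fun a => Real.rpow_nonneg (hf0 _) _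
  have hGyC : ∀ b, Gy b ≤ C ^ α := fun b => by
    calc Gy b ≤ ∫ _, C ^ α ∂μg := by
          refine integral_mono (integrable_of_bdd_s16
            ((hf.comp (measurable_const.add (measurable_id.add measurable_const))).pow_const α).aestronglyMeasurable
            (fun a => hfyα_bdd _)) (integrable_const _) (fun a => by
              exact Real.rpow_le_rpow (hf0 _) (hC _) (by linarith))
      _ = C ^ α := by simp
  -- pointwise Harnack from the Gaussian part
  have hpoint : ∀ b, (G b) ^ α ≤ E * Gy b := fun b => by
    have := hHg α hα (fun z => f (z + b))
      (hf.comp (measurable_id.add measurable_const)) (fun z => hf0 _) ⟨C, fun z => hC _⟩ x y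
    simpa [hG, hGy, add_assoc] using this
  -- Jensen's inequality for t ↦ t^α on [0, ∞)
  have hGint : Integrable G μj :=
    integrable_of_bdd_s16 hGmeas.aestronglyMeasurable
      (fun b => abs_le.2 ⟨(neg_nonpos.2 hC0).trans (hG0 b), hGC b⟩)
  have hGαint : Integrable (fun b => (G b) ^ α) μj :=
    integrable_of_bdd_s16 (hGmeas.pow_const α).aestronglyMeasurable
      (fun b => by
        rw [abs_of_nonneg (Real.rpow_nonneg (hG0 b) _)]
        exact Real.rpow_le_rpow (hG0 b) (hGC b) (by linarith))
  have hjensen : (∫ b, G b ∂μj) ^ α ≤ ∫ b, (G b) ^ α ∂μj := by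
    have hconv : ConvexOn ℝ (Set.Ici 0) fun t : ℝ => t ^ α := convexOn_rpow (le_of_lt hα)
    have hcont : ContinuousOn (fun t : ℝ => t ^ α) (Set.Ici 0) :=
      ContinuousOn.rpow_const continuousOn_id (fun t _ => Or.inr (by linarith))
    exact hconv.map_integral_le hcont isClosed_Ici
      (Filter.Eventually.of_forall fun b => hG0 b) hGint hGαint
  have hGyint : Integrable Gy μj :=
    integrable_of_bdd_s16 hGymeas.aestronglyMeasurable
      (fun b => abs_le.2 ⟨(neg_nonpos.2 (Real.rpow_nonneg hC0 _)).trans (hGy0 b), hGyC b⟩)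
  calc (∫ b, G b ∂μj) ^ α ≤ ∫ b, (G b) ^ α ∂μj := hjensen
    _ ≤ ∫ b, E * Gy b ∂μj :=
        integral_mono hGαint (hGyint.const_mul E) hpoint
    _ = E * ∫ b, Gy b ∂μj := integral_const_mul E _
end

section
/- Let N(Ux, R) be the Gaussian measure on a separable Hilbert space H with mean Ux and trace-class covariance R, and define pf(x) = ∫ f dN(Ux,R). If there exists x₀ ∈ H with Ux₀ ∉ R^{1/2}(H), then p is not strong Feller; i.e., there exists a bounded measurable f such that pf is not continuous. Consequently, if p is strong Feller then U(H) ⊂ R^{1/2}(H). -/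
open MeasureTheory RealInnerProductSpace

variable {H : Type*} [NormedAddCommGroup H] [InnerProductSpace ℝ H] [CompleteSpace H]
  [SecondCountableTopology H] [MeasurableSpace H] [BorelSpace H]

/-- Douglas-type lemma: if `|⟪a,h⟫| ≤ C ‖Q h‖` for all `h` and `Q` is self-adjoint,
then `a` is in the range of `Q`. -/
lemma exists_eq_of_bound (Q : H →L[ℝ] H) (hQsa : ∀ x y : H, ⟪Q x, y⟫ = ⟪x, Q y⟫)
    (a : H) (C : ℝ) (hb : ∀ h : H, |⟪a, h⟫| ≤ C * ‖Q h‖) : ∃ b, Q b = a := by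
  classical
  set f : H →ₗ[ℝ] H := (Q : H →ₗ[ℝ] H) with hf
  set φ : H →ₗ[ℝ] ℝ := ((innerSL ℝ a : H →L[ℝ] ℝ) : H →ₗ[ℝ] ℝ) with hφ
  have hle : LinearMap.ker f ≤ LinearMap.ker φ := by
    intro h hh
    have h0 : Q h = 0 := hh
    have := hb h
    rw [h0, norm_zero, mul_zero] at this
    simpa [φ, LinearMap.mem_ker, abs_nonpos_iff.mp this] using abs_nonpos_iff.mp this
  set S : Submodule ℝ H := LinearMap.range f with hS
  set g : S →ₗ[ℝ] ℝ :=
    ((LinearMap.ker f).liftQ φ hle).comp (f.quotKerEquivRange.symm : S →ₗ[ℝ] _) with hg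
  have hgeval : ∀ h : H, g ⟨f h, LinearMap.mem_range_self f h⟩ = ⟪a, h⟫ := by
    intro h
    have h1 : f.quotKerEquivRange (Submodule.Quotient.mk h) = ⟨f h, LinearMap.mem_range_self f h⟩ :=
      Subtype.ext (LinearMap.quotKerEquivRange_apply_mk f h)
    have h2 : f.quotKerEquivRange.symm ⟨f h, LinearMap.mem_range_self f h⟩
        = Submodule.Quotient.mk h := by
      rw [← h1, LinearEquiv.symm_apply_apply]
    simp only [hg, LinearMap.comp_apply, LinearEquiv.coe_coe, h2, Submodule.liftQ_apply]
    rfl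
  have hCnn : (0:ℝ) ≤ max C 0 := le_max_right _ _
  have hbound : ∀ y : S, ‖g y‖ ≤ max C 0 * ‖y‖ := by
    rintro ⟨y, hy⟩
    obtain ⟨h, rfl⟩ := hy
    rw [show ‖g ⟨f h, LinearMap.mem_range_self f h⟩‖ = |⟪a, h⟫| by
      rw [hgeval h]; exact Real.norm_eq_abs _]
    calc |⟪a, h⟫| ≤ C * ‖Q h‖ := hb h
      _ ≤ max C 0 * ‖Q h‖ := by gcongr; exact le_max_left _ _
      _ = max C 0 * ‖(⟨f h, LinearMap.mem_range_self f h⟩ : S)‖ := rfl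
  set gc : S →L[ℝ] ℝ := g.mkContinuous (max C 0) hbound with hgc
  obtain ⟨G, hGext, -⟩ := exists_extension_norm_eq S gc
  set b : H := (InnerProductSpace.toDual ℝ H).symm G with hb'
  refine ⟨b, ?_⟩
  have key : ∀ h : H, ⟪Q b - a, h⟫ = 0 := by
    intro h
    have h1 : ⟪b, Q h⟫ = G (Q h) := by
      simp [hb', InnerProductSpace.toDual_symm_apply]
    have h2 : G (Q h) = ⟪a, h⟫ := by
      have := hGext ⟨f h, LinearMap.mem_range_self f h⟩
      rw [show G (Q h) = G ((⟨f h, LinearMap.mem_range_self f h⟩ : S) : H) from rfl, this]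
      show gc _ = _
      rw [hgc]
      simpa using hgeval h
    rw [inner_sub_left, hQsa, h1, h2, sub_self]
  have : Q b - a = 0 := by
    have := key (Q b - a)
    rwa [inner_self_eq_zero] at this
  exact sub_eq_zero.mp this

lemma my_integral_cos (μ0 : Measure H) [IsProbabilityMeasure μ0] (R : H →L[ℝ] H)
    (hchar : ∀ ξ : H, charFn μ0 ξ = Complex.exp (-(⟪R ξ, ξ⟫ : ℝ) / 2)) (ξ : H) :
    ∫ z, Real.cos ⟪z, ξ⟫ ∂μ0 = Real.exp (-⟪R ξ, ξ⟫ / 2) := by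
  have hcont : Continuous fun z : H => Complex.exp (Complex.I * (⟪z, ξ⟫ : ℝ)) := by
    exact Complex.continuous_exp.comp (continuous_const.mul
      (Complex.continuous_ofReal.comp (continuous_id.inner continuous_const)))
  have hInt : Integrable (fun z : H => Complex.exp (Complex.I * (⟪z, ξ⟫ : ℝ))) μ0 := by
    refine Integrable.mono' (integrable_const 1) hcont.aestronglyMeasurable ?_
    filter_upwards with z
    rw [Complex.norm_exp]
    simp
  have h1 := congrArg Complex.re (hchar ξ)
  rw [charFn] at h1
  have h2 : ∫ z, (Complex.exp (Complex.I * (⟪z, ξ⟫ : ℝ))).re ∂μ0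
      = (∫ z, Complex.exp (Complex.I * (⟪z, ξ⟫ : ℝ)) ∂μ0).re := by
    simpa using integral_re hInt
  calc ∫ z, Real.cos ⟪z, ξ⟫ ∂μ0
      = ∫ z, (Complex.exp (Complex.I * (⟪z, ξ⟫ : ℝ))).re ∂μ0 := by
        refine integral_congr_ae (Filter.Eventually.of_forall fun z => ?_)
        dsimp only
        rw [mul_comm, Complex.exp_ofReal_mul_I_re]
    _ = (Complex.exp (-(⟪R ξ, ξ⟫ : ℝ) / 2)).re := h2.trans h1
    _ = Real.exp (-⟪R ξ, ξ⟫ / 2) := by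
        rw [show (-(⟪R ξ, ξ⟫ : ℝ) / 2 : ℂ) = ((-⟪R ξ, ξ⟫ / 2 : ℝ) : ℂ) by push_cast; ring,
          ← Complex.ofReal_exp, Complex.ofReal_re]

lemma my_tail_bound (μ0 : Measure H) [IsProbabilityMeasure μ0] (R Q : H →L[ℝ] H)
    (hchar : ∀ ξ : H, charFn μ0 ξ = Complex.exp (-(⟪R ξ, ξ⟫ : ℝ) / 2))
    (hQ : Q.comp Q = R) (hQsa : ∀ x y : H, ⟪Q x, y⟫ = ⟪x, Q y⟫)
    (h : H) (T : ℝ) (hT : 0 < T) :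
    μ0 {z | 2 / T ≤ |⟪z, h⟫|} ≤ ENNReal.ofReal (‖Q h‖ ^ 2 * T ^ 2 / 3) := by
  set σ2 : ℝ := ‖Q h‖ ^ 2 with hσ2
  have hσ2nn : 0 ≤ σ2 := sq_nonneg _
  have hRhh : ⟪R h, h⟫ = σ2 := by
    rw [← hQ]
    show ⟪Q (Q h), h⟫ = σ2
    rw [hQsa, real_inner_self_eq_norm_sq]
  set X : H → ℝ := fun z => ⟪z, h⟫ with hX
  have hXcont : Continuous X := continuous_id.inner continuous_const
  have hXm : Measurable X := hXcont.measurable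
  -- pointwise (in t) integral identity
  have key2 : ∀ t : ℝ, ∫ z, (1 - Real.cos (t * X z)) ∂μ0 = 1 - Real.exp (-(σ2 * t ^ 2) / 2) := by
    intro t
    have hcos : ∫ z, Real.cos (t * X z) ∂μ0 = Real.exp (-(σ2 * t ^ 2) / 2) := by
      have := my_integral_cos μ0 R hchar (t • h)
      have e1 : ∀ z : H, ⟪z, t • h⟫ = t * X z := fun z => real_inner_smul_right _ _ _
      have e2 : ⟪R (t • h), t • h⟫ = σ2 * t ^ 2 := by
        rw [R.map_smul, real_inner_smul_left, real_inner_smul_right, hRhh]; ring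
      rw [e2] at this
      simp only [e1] at this
      exact this
    have hIntcos : Integrable (fun z => Real.cos (t * X z)) μ0 := by
      refine Integrable.mono' (integrable_const 1)
        ((Real.continuous_cos.comp (continuous_const.mul hXcont)).aestronglyMeasurable) ?_
      filter_upwards with z
      exact (abs_le.mpr ⟨Real.neg_one_le_cos _, Real.cos_le_one _⟩)
    rw [integral_sub (integrable_const 1) hIntcos, integral_const, hcos]
    simp
  -- Fubini setup
  set ν : Measure ℝ := volume.restrict (Set.Ioc (0:ℝ) T) with hν
  haveI : IsFiniteMeasure ν := by
    constructor
    rw [hν, Measure.restrict_apply_univ, Real.volume_Ioc]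
    exact ENNReal.ofReal_lt_top
  set F : H × ℝ → ℝ := fun p => 1 - Real.cos (p.2 * X p.1) with hF
  have hFcont : Continuous F :=
    continuous_const.sub (Real.continuous_cos.comp (continuous_snd.mul (hXcont.comp continuous_fst)))
  have hFint : Integrable F (μ0.prod ν) := by
    refine Integrable.mono' (integrable_const 2) hFcont.aestronglyMeasurable ?_
    filter_upwards with p
    rw [Real.norm_eq_abs]
    simp only [hF]
    have := Real.neg_one_le_cos (p.2 * X p.1)
    have := Real.cos_le_one (p.2 * X p.1)
    rw [abs_le]; constructor <;> linarith
  set g : H → ℝ := fun z => ∫ t, F (z, t) ∂ν with hg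
  have hgint : Integrable g μ0 := hFint.integral_prod_left
  have hswap : ∫ z, g z ∂μ0 = ∫ t, (∫ z, F (z, t) ∂μ0) ∂ν :=
    integral_integral_swap (f := fun z t => F (z, t)) hFint
  -- upper bound on the double integral
  have hup : ∫ z, g z ∂μ0 ≤ σ2 * T ^ 3 / 6 := by
    rw [hswap]
    have e3 : ∀ t : ℝ, ∫ z, F (z, t) ∂μ0 = 1 - Real.exp (-(σ2 * t ^ 2) / 2) := fun t => key2 t
    calc ∫ t, (∫ z, F (z, t) ∂μ0) ∂ν = ∫ t in Set.Ioc (0:ℝ) T, (1 - Real.exp (-(σ2 * t ^ 2) / 2)) := by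
          rw [hν]; exact integral_congr_ae (Filter.Eventually.of_forall fun t => e3 t)
      _ ≤ ∫ t in Set.Ioc (0:ℝ) T, σ2 * t ^ 2 / 2 := by
          refine setIntegral_mono_on ?_ ?_ measurableSet_Ioc ?_
          · refine (Continuous.integrableOn_Ioc ?_)
            exact continuous_const.sub (Real.continuous_exp.comp
              (((continuous_const.mul (continuous_pow 2)).neg).div_const 2))
          · exact Continuous.integrableOn_Ioc ((continuous_const.mul (continuous_pow 2)).div_const 2)
          · intro t _
            have := Real.add_one_le_exp (-(σ2 * t ^ 2) / 2)
            linarith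
      _ = σ2 * T ^ 3 / 6 := by
          rw [← intervalIntegral.integral_of_le hT.le]
          have : ∫ t in (0:ℝ)..T, σ2 * t ^ 2 / 2 = (σ2 / 2) * ∫ t in (0:ℝ)..T, t ^ 2 := by
            rw [← intervalIntegral.integral_const_mul]
            congr 1; funext t; ring
          rw [this, integral_pow]
          ring
  -- lower bound via the event
  set E : Set H := {z | 2 / T ≤ |X z|} with hE
  have hEm : MeasurableSet E := measurableSet_le measurable_const hXm.abs
  have hg0 : ∀ z, 0 ≤ g z := by
    intro z
    refine integral_nonneg fun t => ?_
    show (0:ℝ) ≤ 1 - Real.cos (t * X z)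
    have := Real.cos_le_one (t * X z)
    linarith
  have hglow : ∀ z ∈ E, T / 2 ≤ g z := by
    intro z hz
    set x : ℝ := X z with hx
    have hxabs : 2 / T ≤ |x| := hz
    have hxpos : 0 < |x| := lt_of_lt_of_le (div_pos two_pos hT) hxabs
    have hxne : x ≠ 0 := fun h0 => by simp [h0] at hxpos
    have hgz : g z = T - Real.sin (T * x) / x := by
      have : g z = ∫ t in (0:ℝ)..T, (1 - Real.cos (t * x)) := by
        rw [hg, hν, intervalIntegral.integral_of_le hT.le]
      have hsub : IntervalIntegrable (fun t => Real.cos (t * x)) volume 0 T :=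
        Continuous.intervalIntegrable (Real.continuous_cos.comp (continuous_mul_right x)) _ _
      rw [this, intervalIntegral.integral_sub intervalIntegrable_const hsub,
        intervalIntegral.integral_const]
      have hc : ∫ t in (0:ℝ)..T, Real.cos (t * x) = Real.sin (T * x) / x := by
        rw [intervalIntegral.integral_comp_mul_right Real.cos hxne]
        rw [integral_cos]
        simp [zero_mul, Real.sin_zero, smul_eq_mul]
        ring
      rw [hc]
      simp
    rw [hgz]
    have hsin : Real.sin (T * x) / x ≤ T / 2 := by
      have h1 : Real.sin (T * x) / x ≤ |Real.sin (T * x) / x| := le_abs_self _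
      have h2 : |Real.sin (T * x) / x| = |Real.sin (T * x)| / |x| := abs_div _ _
      have h3 : |Real.sin (T * x)| / |x| ≤ 1 / |x| := by
        gcongr; exact Real.abs_sin_le_one _
      have h4 : 1 / |x| ≤ T / 2 := by
        rw [div_le_div_iff₀ hxpos two_pos]
        calc (1:ℝ) * 2 = 2 := one_mul 2
          _ ≤ T * |x| := by
            have := (div_le_iff₀ hT).mp hxabs
            linarith [mul_comm |x| T]
      linarith
    linarith
  -- combine
  have hchain : T / 2 * (μ0 E).toReal ≤ σ2 * T ^ 3 / 6 := by
    have h1 : ∫ z in E, (T / 2) ∂μ0 ≤ ∫ z in E, g z ∂μ0 := by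
      refine setIntegral_mono_on (integrableOn_const (measure_ne_top _ _))
        hgint.integrableOn hEm hglow
    have h2 : ∫ z in E, g z ∂μ0 ≤ ∫ z, g z ∂μ0 :=
      setIntegral_le_integral hgint (Filter.Eventually.of_forall hg0)
    rw [setIntegral_const, smul_eq_mul, mul_comm, measureReal_def] at h1
    linarith
  have htoReal : (μ0 E).toReal ≤ σ2 * T ^ 2 / 3 := by
    have hT2 : 0 < T / 2 := by linarith
    nlinarith [hchain, ENNReal.toReal_nonneg (a := μ0 E)]
  calc μ0 E = ENNReal.ofReal ((μ0 E).toReal) := (ENNReal.ofReal_toReal (measure_ne_top _ _)).symm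
    _ ≤ ENNReal.ofReal (σ2 * T ^ 2 / 3) := ENNReal.ofReal_le_ofReal htoReal

lemma my_as_tendsto (μ0 : Measure H) [IsProbabilityMeasure μ0] (R Q : H →L[ℝ] H)
    (hchar : ∀ ξ : H, charFn μ0 ξ = Complex.exp (-(⟪R ξ, ξ⟫ : ℝ) / 2))
    (hQ : Q.comp Q = R) (hQsa : ∀ x y : H, ⟪Q x, y⟫ = ⟪x, Q y⟫)
    (h : ℕ → H) (hnorm : ∀ k, ‖Q (h k)‖ ≤ ((2:ℝ) ^ k)⁻¹) :
    μ0 {z | Filter.Tendsto (fun k => ⟪z, h k⟫) Filter.atTop (nhds 0)} = 1 := by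
  classical
  set s : ℕ → Set H := fun k => {z | 2 / (2 * ((k:ℝ) + 1)) ≤ |⟪z, h k⟫|} with hs
  set a : ℕ → ℝ := fun k => (((2:ℝ) ^ k)⁻¹) ^ 2 * (2 * ((k:ℝ) + 1)) ^ 2 / 3 with ha
  have hTpos : ∀ k : ℕ, (0:ℝ) < 2 * ((k:ℝ) + 1) := fun k => by positivity
  have hsb : ∀ k, μ0 (s k) ≤ ENNReal.ofReal (a k) := by
    intro k
    refine le_trans (my_tail_bound μ0 R Q hchar hQ hQsa (h k) _ (hTpos k)) ?_
    apply ENNReal.ofReal_le_ofReal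
    have := hnorm k
    have h2 : ‖Q (h k)‖ ^ 2 ≤ (((2:ℝ) ^ k)⁻¹) ^ 2 := by
      apply pow_le_pow_left₀ (norm_nonneg _) this
    rw [ha]
    have h3 : (0:ℝ) ≤ (2 * ((k:ℝ) + 1)) ^ 2 := sq_nonneg _
    nlinarith
  have hanonneg : ∀ k, 0 ≤ a k := fun k => by positivity
  have hasummable : Summable a := by
    have h4 : Summable (fun n : ℕ => (n:ℝ) ^ 2 * (4⁻¹ : ℝ) ^ n) :=
      summable_pow_mul_geometric_of_norm_lt_one 2 (by rw [norm_inv]; norm_num)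
    have h5 : Summable (fun n : ℕ => ((n:ℝ) + 1) ^ 2 * (4⁻¹ : ℝ) ^ n) := by
      have h6 := (summable_nat_add_iff 1).mpr h4
      have h7 := h6.mul_left 4
      refine h7.congr fun n => ?_
      push_cast
      rw [pow_succ]
      ring
    refine (h5.mul_left (4 / 3)).congr fun n => ?_
    have e1 : (((2:ℝ) ^ n)⁻¹) ^ 2 = (4⁻¹ : ℝ) ^ n := by
      rw [sq, ← mul_inv, ← mul_pow, inv_pow]
      norm_num
    show 4 / 3 * (((n:ℝ) + 1) ^ 2 * (4⁻¹ : ℝ) ^ n) = a n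
    rw [ha]
    dsimp only
    rw [e1]
    ring
  have htsum : ∑' k, μ0 (s k) ≠ ⊤ := by
    refine ne_top_of_le_ne_top ?_ (ENNReal.tsum_le_tsum hsb)
    rw [← ENNReal.ofReal_tsum_of_nonneg hanonneg hasummable]
    exact ENNReal.ofReal_ne_top
  have hBC : μ0 (Filter.limsup s Filter.atTop) = 0 := measure_limsup_atTop_eq_zero htsum
  set T0 : Set H := {z | Filter.Tendsto (fun k => ⟪z, h k⟫) Filter.atTop (nhds 0)} with hT0
  have hT0m : MeasurableSet T0 := by
    refine measurableSet_tendsto (nhds (0:ℝ)) (fun k => ?_)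
    exact (continuous_id.inner continuous_const).measurable
  have hsub : T0ᶜ ⊆ Filter.limsup s Filter.atTop := by
    intro z hz
    by_contra hmem
    apply hz
    rw [Filter.mem_limsup_iff_frequently_mem] at hmem
    rw [Filter.not_frequently] at hmem
    show Filter.Tendsto (fun k => ⟪z, h k⟫) Filter.atTop (nhds 0)
    have hbound : ∀ᶠ k in Filter.atTop, ‖⟪z, h k⟫‖ ≤ 2 / (2 * ((k:ℝ) + 1)) := by
      filter_upwards [hmem] with k hk
      rw [Real.norm_eq_abs]
      exact le_of_not_ge hk
    refine squeeze_zero_norm' hbound ?_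
    have := tendsto_one_div_add_atTop_nhds_zero_nat (𝕜 := ℝ)
    refine this.congr fun n => ?_
    field_simp
  have hcompl : μ0 T0ᶜ = 0 := measure_mono_null hsub hBC
  exact (prob_compl_eq_zero_iff hT0m).mp hcompl

/-- for the Gaussian transition operator `pf(x) = ∫ f dN(Ux,R)` (here
`N(Ux,R)` is the translate by `Ux` of the centered Gaussian `μ0` with covariance
`R = Q²`), if some `Ux₀` is not in the range of `R^{1/2} = Q`, then `p` is not strong
Feller: some bounded measurable `f` has discontinuous `pf`. -/
theorem not_strong_feller_of_not_null_controllable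
    (μ0 : Measure H) [IsProbabilityMeasure μ0]
    (R Q U : H →L[ℝ] H)
    (hchar : ∀ ξ : H, charFn μ0 ξ = Complex.exp (-(⟪R ξ, ξ⟫ : ℝ) / 2))
    (hQ : Q.comp Q = R) (hQsa : ∀ x y : H, ⟪Q x, y⟫ = ⟪x, Q y⟫)
    (hQpos : ∀ x : H, 0 ≤ ⟪Q x, x⟫)
    (x₀ : H) (hx₀ : ∀ h : H, Q h ≠ U x₀) :
    ∃ f : H → ℝ, Measurable f ∧ (∃ C, ∀ x, |f x| ≤ C) ∧
      ¬ Continuous (fun x : H => ∫ y, f y ∂(μ0.map (fun z => U x + z))) := by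
  classical
  set a : H := U x₀ with haa
  -- extract the bad sequence
  have hseq : ∀ k : ℕ, ∃ hk : H, ⟪a, hk⟫ = 1 ∧ ‖Q hk‖ ≤ ((2:ℝ) ^ k)⁻¹ := by
    intro k
    by_contra hcon
    push_neg at hcon
    have hbound : ∀ h : H, |⟪a, h⟫| ≤ (2:ℝ) ^ k * ‖Q h‖ := by
      intro h
      by_contra hlt
      push_neg at hlt
      have hne : ⟪a, h⟫ ≠ 0 := by
        intro h0
        rw [h0, abs_zero] at hlt
        exact absurd hlt (not_lt.mpr (by positivity))
      set c : ℝ := ⟪a, h⟫ with hc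
      have habs : 0 < |c| := abs_pos.mpr hne
      refine absurd ?_ (not_le.mpr (hcon (c⁻¹ • h) ?_))
      · -- ‖Q (c⁻¹ • h)‖ ≤ (2 ^ k)⁻¹
        rw [Q.map_smul, norm_smul, norm_inv, Real.norm_eq_abs]
        rw [inv_mul_le_iff₀ habs]
        have h2k : (0:ℝ) < (2:ℝ) ^ k := by positivity
        have h3 := mul_le_mul_of_nonneg_right hlt.le (inv_nonneg.mpr h2k.le)
        rw [mul_comm ((2:ℝ) ^ k) ‖Q h‖, mul_assoc, mul_inv_cancel₀ h2k.ne', mul_one] at h3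
        exact h3
      · -- inner product is 1
        rw [real_inner_smul_right, inv_mul_cancel₀ hne]
    obtain ⟨b, hb⟩ := exists_eq_of_bound Q hQsa a ((2:ℝ) ^ k) hbound
    exact hx₀ b hb
  choose hk hk1 hk2 using hseq
  -- the almost sure convergence set
  set T0 : Set H := {z | Filter.Tendsto (fun k => ⟪z, hk k⟫) Filter.atTop (nhds 0)} with hT0
  have hT0meas : MeasurableSet T0 :=
    measurableSet_tendsto (nhds (0:ℝ)) fun k => (continuous_id.inner continuous_const).measurable
  have hT0one : μ0 T0 = 1 := my_as_tendsto μ0 R Q hchar hQ hQsa hk hk2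
  -- the target sets
  set A : ℕ → Set H := fun n =>
    {x | Filter.Tendsto (fun k => ⟪x, hk k⟫) Filter.atTop (nhds (((n:ℝ) + 1)⁻¹))} with hA
  have hAmeas : ∀ n, MeasurableSet (A n) := fun n =>
    measurableSet_tendsto _ fun k => (continuous_id.inner continuous_const).measurable
  set S : Set H := ⋃ n, A n with hS
  have hSmeas : MeasurableSet S := MeasurableSet.iUnion hAmeas
  set f : H → ℝ := S.indicator fun _ => (1:ℝ) with hf
  refine ⟨f, measurable_const.indicator hSmeas, ⟨1, fun x => ?_⟩, ?_⟩
  · rw [hf]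
    by_cases hx : x ∈ S <;> simp [Set.indicator_apply, hx]
  -- the transition function
  set p : H → ℝ := fun x : H => ∫ y, f y ∂(μ0.map fun z => U x + z) with hp
  show ¬ Continuous p
  have hmeasadd : ∀ x : H, Measurable fun z : H => U x + z := fun x =>
    measurable_id.const_add (U x)
  have hpval : ∀ x : H, p x = ((μ0.map fun z => U x + z) S).toReal := by
    intro x
    rw [hp, hf]
    simp only
    rw [integral_indicator_const (1:ℝ) hSmeas, smul_eq_mul, mul_one, measureReal_def]
  -- value at 0
  have hS0 : μ0 S = 0 := by
    have hcompl : μ0 T0ᶜ = 0 := (prob_compl_eq_zero_iff hT0meas).mpr hT0one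
    refine measure_iUnion_null fun n => measure_mono_null (t := T0ᶜ) ?_ hcompl
    intro x hxA hxT
    have hxA' : Filter.Tendsto (fun k => ⟪x, hk k⟫) Filter.atTop (nhds (((n:ℝ) + 1)⁻¹)) := hxA
    have hxT' : Filter.Tendsto (fun k => ⟪x, hk k⟫) Filter.atTop (nhds 0) := hxT
    have huniq := tendsto_nhds_unique hxA' hxT'
    have hne : ((n:ℝ) + 1)⁻¹ ≠ 0 := by positivity
    exact hne huniq
  have hp0 : p 0 = 0 := by
    rw [hpval 0]
    have : (fun z : H => U 0 + z) = id := by funext z; rw [map_zero, zero_add]; rfl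
    rw [this, Measure.map_id, hS0]
    simp
  -- value along the sequence
  set xseq : ℕ → H := fun n => ((n:ℝ) + 1)⁻¹ • x₀ with hxseq
  have hpn : ∀ n : ℕ, p (xseq n) = 1 := by
    intro n
    rw [hpval]
    have hmap : (μ0.map fun z => U (xseq n) + z) S = 1 := by
      haveI : IsProbabilityMeasure (μ0.map fun z => U (xseq n) + z) :=
        Measure.isProbabilityMeasure_map (hmeasadd (xseq n)).aemeasurable
      refine le_antisymm prob_le_one ?_
      rw [Measure.map_apply (hmeasadd (xseq n)) hSmeas]
      have hsub : T0 ⊆ (fun z => U (xseq n) + z) ⁻¹' S := by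
        intro z hz
        refine Set.mem_iUnion.mpr ⟨n, ?_⟩
        show Filter.Tendsto (fun k => ⟪U (xseq n) + z, hk k⟫) Filter.atTop (nhds (((n:ℝ) + 1)⁻¹))
        have he : ∀ k, ⟪U (xseq n) + z, hk k⟫ = ((n:ℝ) + 1)⁻¹ + ⟪z, hk k⟫ := by
          intro k
          rw [inner_add_left]
          congr 1
          rw [hxseq]
          show ⟪U (((n:ℝ) + 1)⁻¹ • x₀), hk k⟫ = ((n:ℝ) + 1)⁻¹
          rw [U.map_smul, real_inner_smul_left]
          have h1 := hk1 k
          rw [haa] at h1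
          rw [h1, mul_one]
        simp only [he]
        have hz' : Filter.Tendsto (fun k => ⟪z, hk k⟫) Filter.atTop (nhds 0) := hz
        have h2 := hz'.const_add (((n:ℝ) + 1)⁻¹)
        simpa using h2
      calc (1:ENNReal) = μ0 T0 := hT0one.symm
        _ ≤ μ0 ((fun z => U (xseq n) + z) ⁻¹' S) := measure_mono hsub
    rw [hmap]
    simp
  -- conclude
  intro hc
  have hxto : Filter.Tendsto xseq Filter.atTop (nhds 0) := by
    have h1 : Filter.Tendsto (fun n : ℕ => ((n:ℝ) + 1)⁻¹) Filter.atTop (nhds 0) := by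
      have := tendsto_one_div_add_atTop_nhds_zero_nat (𝕜 := ℝ)
      simpa [one_div] using this
    have := h1.smul_const x₀
    rw [zero_smul] at this
    exact this
  have hlim : Filter.Tendsto (fun n => p (xseq n)) Filter.atTop (nhds (p 0)) :=
    (hc.tendsto 0).comp hxto
  have hlim1 : Filter.Tendsto (fun _ : ℕ => (1:ℝ)) Filter.atTop (nhds (p 0)) := by
    refine hlim.congr fun n => hpn n
  have := tendsto_nhds_unique hlim1 tendsto_const_nhds
  rw [hp0] at this
  norm_num at this
end
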